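/- The smallest closed unital star-subalgebra of C containing the element a = (z ↦ z, N) is all of C; that is, the topological closure of the star subalgebra of C generated by a equals C. (This is the paper's claim that (C, ι) with ι(z) = a is a C*-cover of the disc algebra, i.e., C*(ι(A(𝔻))) = C.) -/

import Mathlib

noncomputable section

/-- The unit circle in `ℂ`. -/
abbrev 𝕋 : Set ℂ := Metric.sphere (0 : ℂ) 1

/-- The C*-cover `C = C(𝕋, ℂ) × M₂(ℂ)` of the disc algebra from the paper. -/
abbrev CstarCover : Type := C(𝕋, ℂ) × Matrix (Fin 2) (Fin 2) ℂ

/-- The nilpotent matrix `N` with `N₂₁ = 1` and all other entries `0`. -/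
def N : Matrix (Fin 2) (Fin 2) ℂ := !![0, 0; 1, 0]

/-- The identity function `z ↦ z` as an element of `C(𝕋, ℂ)`. -/
def idT : C(𝕋, ℂ) := ⟨fun z => (z : ℂ), continuous_subtype_val⟩

/-- The element `a = (z ↦ z, N)` of the C*-cover `C`. -/
def a : CstarCover := (idT, N)

lemma star_idT_mul_idT : star idT * idT = 1 := by
  ext z
  have hz : ‖(z : ℂ)‖ = 1 := by simpa using mem_sphere_zero_iff_norm.mp z.2
  simp only [ContinuousMap.mul_apply, ContinuousMap.star_apply, ContinuousMap.one_apply, idT,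
    ContinuousMap.coe_mk, Complex.star_def, RCLike.conj_mul, hz]
  norm_num

lemma starN : star N = !![0, 1; 0, 0] := by
  ext i j
  fin_cases i <;> fin_cases j <;> simp [N, Matrix.star_apply]

lemma star_a_mul_a : star a * a = (1, !![1,0;0,0]) := by
  have h : (star a * a : CstarCover) = (star idT * idT, star N * N) := rfl
  rw [h, star_idT_mul_idT, starN, N, Matrix.mul_fin_two]
  norm_num

lemma a_mul_star_a : a * star a = (1, !![0,0;0,1]) := by
  have h : (a * star a : CstarCover) = (idT * star idT, N * star N) := rfl
  rw [h, mul_comm idT, star_idT_mul_idT, starN, N, Matrix.mul_fin_two]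
  norm_num

lemma matrix_decomp (m : Matrix (Fin 2) (Fin 2) ℂ) :
    m = m 0 0 • !![1,0;0,0] + m 0 1 • !![0,1;0,0] + m 1 0 • !![0,0;1,0] + m 1 1 • !![0,0;0,1] := by
  ext i j; fin_cases i <;> fin_cases j <;> simp

lemma adjoin_idT_separates : (StarAlgebra.adjoin ℂ ({idT} : Set C(𝕋,ℂ))).SeparatesPoints := by
  intro x y hxy
  refine ⟨_, ⟨idT, StarAlgebra.subset_adjoin ℂ _ rfl, rfl⟩, ?_⟩
  simpa [idT] using Subtype.coe_injective.ne hxy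

lemma sw : (StarAlgebra.adjoin ℂ ({idT} : Set C(𝕋,ℂ))).topologicalClosure = ⊤ :=
  ContinuousMap.starSubalgebra_topologicalClosure_eq_top_of_separatesPoints _ adjoin_idT_separates

/-- The element `a = (z ↦ z, N)` generates `C = C(𝕋, ℂ) × M₂(ℂ)` as a C*-algebra:
the topological closure of the star subalgebra generated by `a` is all of `C`. -/
theorem generates_Cstar :
    (StarAlgebra.adjoin ℂ ({a} : Set CstarCover)).topologicalClosure = ⊤ := by
  set S := StarAlgebra.adjoin ℂ ({a} : Set CstarCover) with hS
  have ha : a ∈ S := StarAlgebra.subset_adjoin ℂ _ rfl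
  have h1 : star a * a ∈ S := mul_mem (star_mem ha) ha
  have h2 : a * star a ∈ S := mul_mem ha (star_mem ha)
  -- `(0, diag(1, -1)) ∈ S`
  have hd : ((0, !![(1:ℂ),0;0,-1]) : CstarCover) ∈ S := by
    have h3 := sub_mem h1 h2
    rw [star_a_mul_a, a_mul_star_a] at h3
    convert h3 using 2
    · simp [Prod.ext_iff]
    · ext i j; fin_cases i <;> fin_cases j <;> simp [Prod.ext_iff]
  -- `(0, 1) ∈ S`
  have h01 : ((0, 1) : CstarCover) ∈ S := by
    have h3 := mul_mem hd hd
    have h4 : ((0, !![(1:ℂ),0;0,-1]) * (0, !![(1:ℂ),0;0,-1]) : CstarCover) = (0, 1) := by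
      have h5 : ((0, !![(1:ℂ),0;0,-1]) * (0, !![(1:ℂ),0;0,-1]) : CstarCover)
          = (0 * 0, !![(1:ℂ),0;0,-1] * !![(1:ℂ),0;0,-1]) := rfl
      rw [h5, Matrix.mul_fin_two]
      norm_num
      ext i j; fin_cases i <;> fin_cases j <;> simp [Matrix.one_apply]
    rwa [h4] at h3
  -- `(1, 0) ∈ S`
  have h10 : ((1, 0) : CstarCover) ∈ S := by
    have h3 := sub_mem (one_mem S) h01
    have h4 : ((1,1) - (0,1) : CstarCover) = (1, 0) := by simp [Prod.ext_iff]
    have h5 : (1 : CstarCover) = (1, 1) := rfl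
    rwa [h5, h4] at h3
  -- the four matrix units (paired with 0) are in `S`
  have hE10 : ((0, !![(0:ℂ),0;1,0]) : CstarCover) ∈ S := by
    have h3 := mul_mem h01 ha
    have h4 : ((0, 1) * a : CstarCover) = (0, !![(0:ℂ),0;1,0]) := by
      have h5 : ((0, 1) * a : CstarCover) = (0 * idT, 1 * N) := rfl
      rw [h5, zero_mul, one_mul, N]
    rwa [h4] at h3
  have hE01 : ((0, !![(0:ℂ),1;0,0]) : CstarCover) ∈ S := by
    have h3 := star_mem hE10
    have h4 : (star (0, !![(0:ℂ),0;1,0]) : CstarCover) = (0, !![(0:ℂ),1;0,0]) := by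
      rw [Prod.star_def, star_zero]
      have : star (!![(0:ℂ),0;1,0]) = !![(0:ℂ),1;0,0] := by rw [← N, starN]
      rw [this]
    rwa [h4] at h3
  have hE00 : ((0, !![(1:ℂ),0;0,0]) : CstarCover) ∈ S := by
    have h3 := mul_mem h01 h1
    rw [star_a_mul_a] at h3
    have h4 : ((0, 1) * (1, !![(1:ℂ),0;0,0]) : CstarCover) = (0, !![(1:ℂ),0;0,0]) := by
      rw [Prod.mk_mul_mk, zero_mul, one_mul]
    rwa [h4] at h3
  have hE11 : ((0, !![(0:ℂ),0;0,1]) : CstarCover) ∈ S := by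
    have h3 := mul_mem h01 h2
    rw [a_mul_star_a] at h3
    have h4 : ((0, 1) * (1, !![(0:ℂ),0;0,1]) : CstarCover) = (0, !![(0:ℂ),0;0,1]) := by
      rw [Prod.mk_mul_mk, zero_mul, one_mul]
    rwa [h4] at h3
  -- all of `{0} × M₂(ℂ)` is in `S`
  have hM : ∀ m : Matrix (Fin 2) (Fin 2) ℂ, ((0, m) : CstarCover) ∈ S := by
    intro m
    have h3 : ((0, m) : CstarCover)
        = m 0 0 • (0, !![1,0;0,0]) + m 0 1 • (0, !![0,1;0,0])
          + m 1 0 • (0, !![0,0;1,0]) + m 1 1 • (0, !![0,0;0,1]) := by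
      simp only [Prod.smul_mk, smul_zero, Prod.mk_add_mk, add_zero]
      exact Prod.ext rfl (matrix_decomp m)
    rw [h3]
    exact add_mem (add_mem (add_mem (SMulMemClass.smul_mem _ hE00) (SMulMemClass.smul_mem _ hE01))
      (SMulMemClass.smul_mem _ hE10)) (SMulMemClass.smul_mem _ hE11)
  -- `(idT, 0) ∈ S`
  have haT : ((idT, 0) : CstarCover) ∈ S := by
    have h3 := mul_mem h10 ha
    have h4 : ((1, 0) * a : CstarCover) = (idT, 0) := by
      have h5 : ((1, 0) * a : CstarCover) = (1 * idT, 0 * N) := rfl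
      rw [h5, one_mul, zero_mul]
    rwa [h4] at h3
  -- all of `C(𝕋,ℂ) × {0}` is in the closure of `S`, by Stone-Weierstrass
  have hF : ∀ f : C(𝕋,ℂ), ((f, 0) : CstarCover) ∈ S.topologicalClosure := by
    let T : StarSubalgebra ℂ C(𝕋,ℂ) :=
    { carrier := {f | ((f, 0) : CstarCover) ∈ S.topologicalClosure}
      mul_mem' := fun {f g} hf hg => by
        have h3 : ((f * g, 0) : CstarCover) = (f, 0) * (g, 0) := by
          rw [Prod.mk_mul_mk, mul_zero]
        show ((f * g, 0) : CstarCover) ∈ S.topologicalClosure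
        rw [h3]; exact mul_mem hf hg
      one_mem' := S.le_topologicalClosure h10
      add_mem' := fun {f g} hf hg => by
        have h3 : ((f + g, 0) : CstarCover) = (f, 0) + (g, 0) := by
          rw [Prod.mk_add_mk, add_zero]
        show ((f + g, 0) : CstarCover) ∈ S.topologicalClosure
        rw [h3]; exact add_mem hf hg
      zero_mem' := by exact zero_mem S.topologicalClosure
      algebraMap_mem' := fun c => by
        have h3 : ((algebraMap ℂ C(𝕋,ℂ) c, 0) : CstarCover) = c • (1, 0) := by
          simp [Algebra.algebraMap_eq_smul_one]
        show ((algebraMap ℂ C(𝕋,ℂ) c, 0) : CstarCover) ∈ S.topologicalClosure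
        rw [h3]; exact SMulMemClass.smul_mem c (S.le_topologicalClosure h10)
      star_mem' := fun {f} hf => by
        have h3 : ((star f, 0) : CstarCover) = star (f, 0) := by
          rw [Prod.star_def, star_zero]
        show ((star f, 0) : CstarCover) ∈ S.topologicalClosure
        rw [h3]; exact star_mem hf }
    have hTclosed : IsClosed (T : Set C(𝕋,ℂ)) := by
      have h3 : (T : Set C(𝕋,ℂ)) = (fun f : C(𝕋,ℂ) => ((f, 0) : CstarCover)) ⁻¹'
          (S.topologicalClosure : Set CstarCover) := rfl
      rw [h3]
      exact (S.isClosed_topologicalClosure).preimage (continuous_id.prodMk continuous_const)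
    have hle : StarAlgebra.adjoin ℂ ({idT} : Set C(𝕋,ℂ)) ≤ T := by
      rw [StarAlgebra.adjoin_le_iff]
      exact Set.singleton_subset_iff.mpr (S.le_topologicalClosure haT)
    have htop : (⊤ : StarSubalgebra ℂ C(𝕋,ℂ)) ≤ T := by
      rw [← sw]
      exact StarSubalgebra.topologicalClosure_minimal hle hTclosed
    intro f
    exact htop (by trivial)
  -- conclude
  rw [eq_top_iff]
  intro x _
  have h3 : x = (x.1, 0) + (0, x.2) := by simp [Prod.ext_iff]
  rw [h3]
  exact add_mem (hF x.1) (S.le_topologicalClosure (hM x.2))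

end
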